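/- Let K be a field, P ∈ K[x]^{m×n}, and s ∈ ℤ^n such that P is in s-weak Popov form. Let t = rdeg_s(P) ∈ ℤ^m, and let Q ∈ K[x]^{k×m} be in t-weak Popov form. Then the product Q·P is in s-weak Popov form. -/

import Mathlib

open Polynomial Matrix

noncomputable section

variable {K : Type*} [Field K]

/-- Degree of a univariate polynomial, viewed in `ℤ ∪ {⊥}`. -/
def pdegZ (p : K[X]) : WithBot ℤ := p.degree.map (Nat.cast : ℕ → ℤ)

/-- Shifted degree (`s`-degree) of a row vector. -/
def sdeg {n : ℕ} (s : Fin n → ℤ) (p : Fin n → K[X]) : WithBot ℤ :=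
  Finset.univ.sup fun j => pdegZ (p j) + (s j : WithBot ℤ)

/-- `s`-leading matrix of `P`. -/
def leadMat {m n : ℕ} (s : Fin n → ℤ) (P : Matrix (Fin m) (Fin n) K[X]) :
    Matrix (Fin m) (Fin n) K :=
  Matrix.of fun i j =>
    if pdegZ (P i j) + (s j : WithBot ℤ) = sdeg s (P i) then (P i j).leadingCoeff else 0

/-- `P` is `s`-reduced: its `s`-leading matrix has full row rank. -/
def IsShiftReduced {m n : ℕ} (s : Fin n → ℤ) (P : Matrix (Fin m) (Fin n) K[X]) : Prop :=
  (leadMat s P).rank = m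

/-- `j` is the `s`-pivot index of the row `p`: the largest index where the `s`-degree is attained. -/
def IsPivotIndex {n : ℕ} (s : Fin n → ℤ) (p : Fin n → K[X]) (j : Fin n) : Prop :=
  pdegZ (p j) + (s j : WithBot ℤ) = sdeg s p ∧
  ∀ j', j < j' → pdegZ (p j') + (s j' : WithBot ℤ) ≠ sdeg s p

/-- `P` is in `s`-weak Popov form: no zero row and strictly increasing `s`-pivot indices. -/
def IsWeakPopov {m n : ℕ} (s : Fin n → ℤ) (P : Matrix (Fin m) (Fin n) K[X]) : Prop :=
  (∀ i, P i ≠ 0) ∧ ∃ piv : Fin m → Fin n, StrictMono piv ∧ ∀ i, IsPivotIndex s (P i) (piv i)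

/-- The rows of `Kb` form a basis of the left kernel of `F`. -/
def IsKernelBasis {ℓ m : ℕ} {β : Type*} [Fintype β]
    (Kb : Matrix (Fin ℓ) (Fin m) K[X]) (F : Matrix (Fin m) β K[X]) : Prop :=
  (∀ i, Kb i ᵥ* F = 0) ∧
  LinearIndependent K[X] (fun i : Fin ℓ => Kb i) ∧
  ∀ p : Fin m → K[X], p ᵥ* F = 0 → ∃ u : Fin ℓ → K[X], p = u ᵥ* Kb

/-- Membership in the relation module `Rel_M(F)`. -/
def InRelModule {m n : ℕ} (M : Matrix (Fin n) (Fin n) K[X])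
    (F : Matrix (Fin m) (Fin n) K[X]) (p : Fin m → K[X]) : Prop :=
  ∃ q : Fin n → K[X], p ᵥ* F = q ᵥ* M

/-- The rows of `A` form a basis of the relation module `Rel_M(F)`. -/
def IsRelationBasis {ℓ m n : ℕ} (M : Matrix (Fin n) (Fin n) K[X])
    (A : Matrix (Fin ℓ) (Fin m) K[X]) (F : Matrix (Fin m) (Fin n) K[X]) : Prop :=
  (∀ i, InRelModule M F (A i)) ∧
  LinearIndependent K[X] (fun i : Fin ℓ => A i) ∧
  ∀ p : Fin m → K[X], InRelModule M F p → ∃ u : Fin ℓ → K[X], p = u ᵥ* A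

/-- Rank of a polynomial matrix: its rank over the fraction field `K(x)`. -/
def polyRank {α β : Type*} [Fintype β] (F : Matrix α β K[X]) : ℕ :=
  (F.map (algebraMap K[X] (RatFunc K))).rank

/-- Lexicographic comparison of tuples. -/
def lexLE {r n : ℕ} (a b : Fin r → Fin n) : Prop :=
  ∀ i, (∀ k, k < i → a k = b k) → a i ≤ b i

/-- `j` lists the column rank profile of `F`: the lexicographically smallest strictly
increasing tuple of `rank F` column indices selecting columns of full rank. -/
def IsColRankProfile {α : Type*} {n r : ℕ} (F : Matrix α (Fin n) K[X])
    (j : Fin r → Fin n) : Prop :=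
  StrictMono j ∧ polyRank F = r ∧ polyRank (F.submatrix id j) = r ∧
  ∀ j' : Fin r → Fin n, StrictMono j' → polyRank (F.submatrix id j') = r → lexLE j j'



lemma pdegZ_le_iff {p q : K[X]} : pdegZ p ≤ pdegZ q ↔ p.degree ≤ q.degree := by
  rw [pdegZ, pdegZ]
  cases p.degree <;> cases q.degree <;>
    simp [WithBot.map_bot, WithBot.map_coe, WithBot.coe_le_coe]

lemma pdegZ_lt_iff {p q : K[X]} : pdegZ p < pdegZ q ↔ p.degree < q.degree := by
  rw [pdegZ, pdegZ]
  cases p.degree <;> cases q.degree <;>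
    simp [WithBot.map_bot, WithBot.map_coe, WithBot.coe_lt_coe]

lemma pdegZ_eq_bot_iff {p : K[X]} : pdegZ p = ⊥ ↔ p = 0 := by
  simp [pdegZ, WithBot.map_eq_bot_iff, degree_eq_bot]

lemma pdegZ_mul (p q : K[X]) : pdegZ (p * q) = pdegZ p + pdegZ q := by
  rw [pdegZ, pdegZ, pdegZ, degree_mul]
  cases hp : p.degree <;> cases hq : q.degree <;>
    simp [WithBot.map_bot, WithBot.map_coe, ← WithBot.coe_add]

lemma pdegZ_zero : pdegZ (0 : K[X]) = ⊥ := by simp [pdegZ]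

lemma pdegZ_add_le (p q : K[X]) : pdegZ (p + q) ≤ max (pdegZ p) (pdegZ q) := by
  rcases le_total p.degree q.degree with h | h
  · exact le_max_of_le_right (pdegZ_le_iff.mpr ((degree_add_le p q).trans (max_le h le_rfl)))
  · exact le_max_of_le_left (pdegZ_le_iff.mpr ((degree_add_le p q).trans (max_le le_rfl h)))

lemma pdegZ_add_eq_left {p q : K[X]} (h : pdegZ q < pdegZ p) : pdegZ (p + q) = pdegZ p := by
  rw [pdegZ, pdegZ, degree_add_eq_left_of_degree_lt (pdegZ_lt_iff.mp h)]

lemma pdegZ_sum_le {ι : Type*} {F : Finset ι} {f : ι → K[X]} {E : WithBot ℤ}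
    (h : ∀ l ∈ F, pdegZ (f l) ≤ E) : pdegZ (∑ l ∈ F, f l) ≤ E := by
  classical
  induction F using Finset.induction with
  | empty => simp [pdegZ_zero]
  | insert _ _ hx ih =>
    rename_i a F'
    rw [Finset.sum_insert hx]
    exact (pdegZ_add_le _ _).trans (max_le (h a (Finset.mem_insert_self a F'))
      (ih fun l hl => h l (Finset.mem_insert_of_mem hl)))

lemma pdegZ_sum_lt {ι : Type*} {F : Finset ι} {f : ι → K[X]} {E : WithBot ℤ}
    (hE : ⊥ < E) (h : ∀ l ∈ F, pdegZ (f l) < E) : pdegZ (∑ l ∈ F, f l) < E := by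
  classical
  induction F using Finset.induction with
  | empty => simpa [pdegZ_zero] using hE
  | insert _ _ hx ih =>
    rename_i a F'
    rw [Finset.sum_insert hx]
    exact (pdegZ_add_le _ _).trans_lt (max_lt (h a (Finset.mem_insert_self a F'))
      (ih fun l hl => h l (Finset.mem_insert_of_mem hl)))

lemma wadd_le_iff (a : WithBot ℤ) (c d : ℤ) :
    a + (c : WithBot ℤ) ≤ (d : WithBot ℤ) ↔ a ≤ ((d - c : ℤ) : WithBot ℤ) := by
  cases a with
  | bot => simp
  | coe a => rw [← WithBot.coe_add, WithBot.coe_le_coe, WithBot.coe_le_coe]; omega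

lemma wadd_lt_iff (a : WithBot ℤ) (c d : ℤ) :
    a + (c : WithBot ℤ) < (d : WithBot ℤ) ↔ a < ((d - c : ℤ) : WithBot ℤ) := by
  cases a with
  | bot => simp [WithBot.bot_lt_coe]
  | coe a => rw [← WithBot.coe_add, WithBot.coe_lt_coe, WithBot.coe_lt_coe]; omega

lemma wadd_eq_iff (a : WithBot ℤ) (c d : ℤ) :
    a + (c : WithBot ℤ) = (d : WithBot ℤ) ↔ a = ((d - c : ℤ) : WithBot ℤ) := by
  cases a with
  | bot => simp
  | coe a =>
    rw [← WithBot.coe_add, WithBot.coe_inj, WithBot.coe_inj]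
    constructor <;> intro h <;> omega

lemma le_sdeg {n : ℕ} (s : Fin n → ℤ) (p : Fin n → K[X]) (j : Fin n) :
    pdegZ (p j) + (s j : WithBot ℤ) ≤ sdeg s p :=
  Finset.le_sup (f := fun j => pdegZ (p j) + (s j : WithBot ℤ)) (Finset.mem_univ j)

lemma sdeg_le {n : ℕ} {s : Fin n → ℤ} {p : Fin n → K[X]} {E : WithBot ℤ}
    (h : ∀ j, pdegZ (p j) + (s j : WithBot ℤ) ≤ E) : sdeg s p ≤ E :=
  Finset.sup_le (f := fun j => pdegZ (p j) + (s j : WithBot ℤ)) fun j _ => h j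

lemma key {m n : ℕ} {P : Matrix (Fin m) (Fin n) K[X]} {s : Fin n → ℤ}
    {piv : Fin m → Fin n} (hpivmono : StrictMono piv)
    (hpivP : ∀ i, IsPivotIndex s (P i) (piv i))
    {t : Fin m → ℤ} (ht : ∀ i, (t i : WithBot ℤ) = sdeg s (P i))
    {q : Fin m → K[X]} (hq : q ≠ 0) {i₀ : Fin m} (hpiv : IsPivotIndex t q i₀) :
    (fun j => ∑ l, q l * P l j) ≠ 0 ∧
      IsPivotIndex s (fun j => ∑ l, q l * P l j) (piv i₀) := by
  classical
  obtain ⟨hq1, hq2⟩ := hpiv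
  set D := sdeg t q with hDdef
  obtain ⟨l₀, hl₀⟩ := Function.ne_iff.mp hq
  have hql₀ : pdegZ (q l₀) ≠ ⊥ := fun h => hl₀ (pdegZ_eq_bot_iff.mp h)
  have hDbot : ⊥ < D := by
    refine lt_of_lt_of_le ?_ (le_sdeg t q l₀)
    exact bot_lt_iff_ne_bot.mpr (WithBot.add_ne_bot.mpr ⟨hql₀, WithBot.coe_ne_bot⟩)
  obtain ⟨d, hd⟩ := WithBot.ne_bot_iff_exists.mp hDbot.ne'
  have tP : ∀ l j, pdegZ (P l j) + (s j : WithBot ℤ) ≤ (t l : WithBot ℤ) := fun l j => by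
    rw [ht l]
    exact le_sdeg s (P l) j
  have tQ : ∀ l, pdegZ (q l) + (t l : WithBot ℤ) ≤ D :=
    fun l => le_sdeg t q l
  have termle : ∀ l j, pdegZ (q l * P l j) + (s j : WithBot ℤ) ≤ D := by
    intro l j
    calc pdegZ (q l * P l j) + (s j : WithBot ℤ)
        = pdegZ (q l) + (pdegZ (P l j) + (s j : WithBot ℤ)) := by
          rw [pdegZ_mul, add_assoc]
      _ ≤ pdegZ (q l) + (t l : WithBot ℤ) := add_le_add le_rfl (tP l j)
      _ ≤ D := tQ l
  have termlt : ∀ l j, piv i₀ ≤ j → (l ≠ i₀ ∨ piv i₀ < j) →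
      pdegZ (q l * P l j) + (s j : WithBot ℤ) < D := by
    intro l j hj hcase
    by_cases hql : q l = 0
    · rw [hql, zero_mul, pdegZ_zero, WithBot.bot_add]
      exact hDbot
    · have hqlb : pdegZ (q l) ≠ ⊥ := fun h => hql (pdegZ_eq_bot_iff.mp h)
      rcases lt_or_ge i₀ l with hl | hl
      · -- l > i₀ : q's pivot says strict
        have h1 : pdegZ (q l) + (t l : WithBot ℤ) < D :=
          lt_of_le_of_ne (tQ l) (hq2 l hl)
        calc pdegZ (q l * P l j) + (s j : WithBot ℤ) ≤ pdegZ (q l) + (t l : WithBot ℤ) := by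
              rw [pdegZ_mul, add_assoc]; exact add_le_add le_rfl (tP l j)
          _ < D := h1
      · -- l ≤ i₀ : piv l < j
        have hplj : piv l < j := by
          rcases lt_or_eq_of_le hl with hl' | hl'
          · exact lt_of_lt_of_le (hpivmono hl') hj
          · rcases hcase with hc | hc
            · exact absurd hl' hc
            · rw [hl']; exact hc
        have h1 : pdegZ (P l j) + (s j : WithBot ℤ) < (t l : WithBot ℤ) := by
          refine lt_of_le_of_ne (tP l j) ?_
          rw [ht l]
          exact (hpivP l).2 j hplj
        calc pdegZ (q l * P l j) + (s j : WithBot ℤ)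
            = pdegZ (q l) + (pdegZ (P l j) + (s j : WithBot ℤ)) := by
              rw [pdegZ_mul, add_assoc]
          _ < pdegZ (q l) + (t l : WithBot ℤ) := by
              exact WithBot.add_lt_add_left hqlb h1
          _ ≤ D := tQ l
  have termeq : pdegZ (q i₀ * P i₀ (piv i₀)) + (s (piv i₀) : WithBot ℤ) = D := by
    rw [pdegZ_mul, add_assoc, (hpivP i₀).1, ← ht i₀]
    exact hq1
  set r : Fin n → K[X] := fun j => ∑ l, q l * P l j with hrdef
  have rowle : ∀ j, pdegZ (r j) + (s j : WithBot ℤ) ≤ D := by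
    intro j
    rw [← hd, wadd_le_iff]
    exact pdegZ_sum_le fun l _ => by
      rw [← wadd_le_iff, hd]; exact termle l j
  have rowlt : ∀ j, piv i₀ < j → pdegZ (r j) + (s j : WithBot ℤ) < D := by
    intro j hj
    rw [← hd, wadd_lt_iff]
    exact pdegZ_sum_lt (WithBot.bot_lt_coe _) fun l _ => by
      rw [← wadd_lt_iff, hd]; exact termlt l j hj.le (Or.inr hj)
  have roweq : pdegZ (r (piv i₀)) + (s (piv i₀) : WithBot ℤ) = D := by
    have hsplit : r (piv i₀) = q i₀ * P i₀ (piv i₀) +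
        ∑ l ∈ Finset.univ.erase i₀, q l * P l (piv i₀) :=
      (Finset.add_sum_erase _ _ (Finset.mem_univ i₀)).symm
    have hterm : pdegZ (q i₀ * P i₀ (piv i₀)) = ((d - s (piv i₀) : ℤ) : WithBot ℤ) := by
      rw [← wadd_eq_iff, hd]; exact termeq
    have hrest : pdegZ (∑ l ∈ Finset.univ.erase i₀, q l * P l (piv i₀)) <
        pdegZ (q i₀ * P i₀ (piv i₀)) := by
      rw [hterm]
      exact pdegZ_sum_lt (WithBot.bot_lt_coe _) fun l hl => by
        rw [← wadd_lt_iff, hd]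
        exact termlt l (piv i₀) le_rfl (Or.inl (Finset.ne_of_mem_erase hl))
    rw [hsplit, pdegZ_add_eq_left hrest, termeq]
  have hsdeg : sdeg s r = D :=
    le_antisymm (sdeg_le rowle) (roweq ▸ le_sdeg s r (piv i₀))
  refine ⟨?_, ?_, ?_⟩
  · intro h0
    have : r (piv i₀) = 0 := congrFun h0 (piv i₀)
    rw [this, pdegZ_zero, WithBot.bot_add] at roweq
    exact hDbot.ne' roweq.symm
  · rw [hsdeg]; exact roweq
  · intro j' hj'
    rw [hsdeg]
    exact ne_of_lt (rowlt j' hj')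


/-- Products of shifted weak Popov matrices are shifted weak Popov. -/
theorem stmt4 {K : Type*} [Field K] {m n k : ℕ}
    (P : Matrix (Fin m) (Fin n) K[X]) (s : Fin n → ℤ) (hP : IsWeakPopov s P)
    (t : Fin m → ℤ) (ht : ∀ i, (t i : WithBot ℤ) = sdeg s (P i))
    (Q : Matrix (Fin k) (Fin m) K[X]) (hQ : IsWeakPopov t Q) :
    IsWeakPopov s (Q * P) := by
  obtain ⟨hP0, piv, hpm, hpP⟩ := hP
  obtain ⟨hQ0, qiv, hqm, hqQ⟩ := hQ
  have hrow : ∀ i : Fin k, (Q * P) i = fun j => ∑ l, Q i l * P l j :=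
    fun i => funext fun j => Matrix.mul_apply
  refine ⟨fun i => ?_, piv ∘ qiv, hpm.comp hqm, fun i => ?_⟩
  · rw [hrow i]
    exact (key hpm hpP ht (hQ0 i) (hqQ i)).1
  · show IsPivotIndex s ((Q * P) i) (piv (qiv i))
    rw [hrow i]
    exact (key hpm hpP ht (hQ0 i) (hqQ i)).2

end
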